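/- arXiv:math/9611207 — 8 statements merged into one kernel-verified Lean document; each statement's English description precedes it below -/
import Mathlib

section
/- Let G be a Polish group and X a Polish G-space. Then for every x ∈ X, the orbit [x]_G = {g·x : g ∈ G} is a Borel subset of X. -/
open Pointwise Set Metric TopologicalSpace Filter MulAction

namespace OrbitBorelAux

/-- Recursive selection of basic-open-set indices used to build a Borel transversal for the
left cosets of `S` in `G`. -/
noncomputable def selIdx {G : Type*} [Group G] [MetricSpace G] (e : ℕ → Set G) (S : Set G) :
    ℕ → G → ℕ
  | 0, g => sInf {k | g ∈ e k * S ∧ EMetric.diam (e k) ≤ ENNReal.ofReal ((1/2 : ℝ) ^ (0 : ℕ))}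
  | n+1, g => sInf {k | g ∈ e k * S ∧ closure (e k) ⊆ e (selIdx e S n g) ∧
      EMetric.diam (e k) ≤ ENNReal.ofReal ((1/2 : ℝ) ^ (n+1))}

/-- A measurable-slice `sInf` selection is measurable into `ℕ`. -/
theorem measurable_sInf {G : Type*} [MeasurableSpace G] {Q : ℕ → G → Prop}
    (hQ : ∀ k, MeasurableSet {g | Q k g}) :
    Measurable (fun g => sInf {k | Q k g}) := by
  apply measurable_to_countable'
  intro j
  have : (fun g => sInf {k | Q k g}) ⁻¹' {j} =
      ({g | Q j g} ∩ ⋂ i, ⋂ (_ : i < j), {g | Q i g}ᶜ) ∪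
        ({g | ∀ i, ¬ Q i g} ∩ {g | j = 0}) := by
    ext g
    simp only [mem_preimage, mem_singleton_iff, mem_union, mem_inter_iff, mem_iInter,
      mem_compl_iff, mem_setOf_eq]
    constructor
    · intro h
      by_cases hne : {k | Q k g}.Nonempty
      · left
        refine ⟨h ▸ Nat.sInf_mem hne, fun i hij => ?_⟩
        exact Nat.notMem_of_lt_sInf (h ▸ hij)
      · right
        rw [Set.not_nonempty_iff_eq_empty] at hne
        exact ⟨fun i => Set.eq_empty_iff_forall_notMem.mp hne i,
          by rw [← h, hne, Nat.sInf_empty]⟩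
    · rintro (⟨hj, hlt⟩ | ⟨hnone, rfl⟩)
      · refine le_antisymm (Nat.sInf_le hj) ?_
        by_contra hc
        push_neg at hc
        have := Nat.sInf_mem (⟨j, hj⟩ : {k | Q k g}.Nonempty)
        exact hlt _ hc this
      · have : {k | Q k g} = ∅ := Set.eq_empty_iff_forall_notMem.mpr hnone
        rw [this, Nat.sInf_empty]
  rw [this]
  refine MeasurableSet.union (MeasurableSet.inter (hQ j) ?_) (MeasurableSet.inter ?_ ?_)
  · exact MeasurableSet.iInter fun i => MeasurableSet.iInter fun _ => (hQ i).compl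
  · have : {g | ∀ i, ¬ Q i g} = ⋂ i, {g | Q i g}ᶜ := by ext g; simp
    rw [this]; exact MeasurableSet.iInter fun i => (hQ i).compl
  · by_cases h : j = 0 <;> simp [h]



variable {G : Type*} [Group G] [MetricSpace G] [IsTopologicalGroup G]
  [CompleteSpace G] [SecondCountableTopology G] [MeasurableSpace G] [BorelSpace G]

/-- Existence of a Borel transversal for the left cosets of a closed subgroup(-like set). -/
theorem exists_transversal {S : Set G} (hS : IsClosed S) (h1 : (1 : G) ∈ S)
    (hmul : ∀ a ∈ S, ∀ b ∈ S, a * b ∈ S) (hinv : ∀ a ∈ S, a⁻¹ ∈ S) :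
    ∃ T : Set G, MeasurableSet T ∧ ∀ g : G, ∃! t, t ∈ T ∧ ∃ h ∈ S, g * h = t := by
  classical
  -- a countable basis with diameter/closure control
  obtain ⟨e, eopen, key⟩ : ∃ e : ℕ → Set G, (∀ k, IsOpen (e k)) ∧
      ∀ (s : Set G), IsOpen s → ∀ y ∈ s, ∀ ε : ℝ, 0 < ε →
        ∃ k, y ∈ e k ∧ closure (e k) ⊆ s ∧ EMetric.diam (e k) ≤ ENNReal.ofReal ε := by
    have hne : (countableBasis G).Nonempty := by
      obtain ⟨B, hB, -⟩ := (isBasis_countableBasis G).exists_subset_of_mem_open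
        (mem_univ (1 : G)) isOpen_univ
      exact ⟨B, hB⟩
    obtain ⟨e, he⟩ := (countable_countableBasis G).exists_eq_range hne
    refine ⟨e, fun k => isOpen_of_mem_countableBasis (he ▸ mem_range_self k), ?_⟩
    intro s hs z hz ε hε
    obtain ⟨r, hr, hball⟩ := Metric.isOpen_iff.1 hs z hz
    obtain ⟨r', hr'pos, hr'r, hr'e⟩ : ∃ r' : ℝ, 0 < r' ∧ r' < r ∧ 2 * r' ≤ ε := by
      refine ⟨min (r / 2) (ε / 2), lt_min (by linarith) (by linarith), ?_, ?_⟩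
      · exact lt_of_le_of_lt (min_le_left _ _) (by linarith)
      · have := min_le_right (r / 2) (ε / 2); linarith
    obtain ⟨B, hB, hzB, hBsub⟩ := (isBasis_countableBasis G).exists_subset_of_mem_open
      (Metric.mem_ball_self hr'pos) Metric.isOpen_ball
    obtain ⟨k, hk⟩ : ∃ k, e k = B := by
      have : B ∈ range e := he ▸ hB
      exact this.imp fun k h => h
    refine ⟨k, hk ▸ hzB, ?_, ?_⟩
    · rw [hk]
      calc closure B ⊆ closure (ball z r') := closure_mono hBsub
      _ ⊆ closedBall z r' := closure_ball_subset_closedBall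
      _ ⊆ ball z r := closedBall_subset_ball hr'r
      _ ⊆ s := hball
    · rw [hk]
      calc EMetric.diam B ≤ EMetric.diam (ball z r') := EMetric.diam_mono hBsub
      _ ≤ 2 * ENNReal.ofReal r' := by rw [← Metric.emetric_ball]; exact EMetric.diam_ball
      _ ≤ ENNReal.ofReal ε := by
          rw [← ENNReal.ofReal_ofNat, ← ENNReal.ofReal_mul (by norm_num)]
          exact ENNReal.ofReal_le_ofReal hr'e
  set K := selIdx e S with hKdef
  -- membership in the coset-saturation transfers along right multiplication by `S`
  have hmemiff : ∀ (A : Set G) (g h : G), h ∈ S → (g * h ∈ A * S ↔ g ∈ A * S) := by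
    intro A g h hh
    simp only [Set.mem_mul]
    constructor
    · rintro ⟨a, ha, s, hs, hash⟩
      exact ⟨a, ha, s * h⁻¹, hmul s hs h⁻¹ (hinv h hh), by
        rw [← mul_assoc, hash, mul_assoc, mul_inv_cancel, mul_one]⟩
    · rintro ⟨a, ha, s, hs, hash⟩
      exact ⟨a, ha, s * h, hmul s hs h hh, by rw [← mul_assoc, hash]⟩
  -- the zero-step set is nonempty
  have ne0 : ∀ g : G, {k | g ∈ e k * S ∧
      EMetric.diam (e k) ≤ ENNReal.ofReal ((1/2 : ℝ) ^ (0 : ℕ))}.Nonempty := by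
    intro g
    obtain ⟨k, hgk, -, hd⟩ := key univ isOpen_univ g (mem_univ g) ((1/2 : ℝ) ^ (0 : ℕ))
      (by norm_num)
    exact ⟨k, ⟨Set.mem_mul.2 ⟨g, hgk, 1, h1, mul_one g⟩, hd⟩⟩
  -- the successor-step set is nonempty, given the invariant at step `n`
  have neS : ∀ (n : ℕ) (g : G), g ∈ e (K n g) * S → {k | g ∈ e k * S ∧
      closure (e k) ⊆ e (K n g) ∧
      EMetric.diam (e k) ≤ ENNReal.ofReal ((1/2 : ℝ) ^ (n+1))}.Nonempty := by
    intro n g hmem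
    obtain ⟨a, ha, s, hs, has⟩ := Set.mem_mul.1 hmem
    obtain ⟨k, hak, hcl, hd⟩ := key (e (K n g)) (eopen _) a ha ((1/2 : ℝ) ^ (n+1))
      (by positivity)
    exact ⟨k, ⟨Set.mem_mul.2 ⟨a, hak, s, hs, has⟩, hcl, hd⟩⟩
  -- the invariant: `g` is in the saturation of the chosen basic set
  have memS : ∀ (n : ℕ) (g : G), g ∈ e (K n g) * S := by
    intro n
    induction n with
    | zero =>
      intro g
      have := Nat.sInf_mem (ne0 g)
      exact this.1
    | succ n ih =>
      intro g
      have := Nat.sInf_mem (neS n g (ih g))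
      exact this.1
  have hdiam : ∀ (n : ℕ) (g : G),
      EMetric.diam (e (K n g)) ≤ ENNReal.ofReal ((1/2 : ℝ) ^ n) := by
    intro n g
    cases n with
    | zero => exact (Nat.sInf_mem (ne0 g)).2
    | succ n => exact (Nat.sInf_mem (neS n g (memS n g))).2.2
  have hclos : ∀ (n : ℕ) (g : G), closure (e (K (n+1) g)) ⊆ e (K n g) := by
    intro n g
    exact (Nat.sInf_mem (neS n g (memS n g))).2.1
  -- the selection only depends on the coset
  have hcoset : ∀ (n : ℕ) (g h : G), h ∈ S → K n (g * h) = K n g := by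
    intro n
    induction n with
    | zero =>
      intro g h hh
      show selIdx e S 0 (g * h) = selIdx e S 0 g
      simp only [selIdx]
      congr 1
      ext k
      simp only [mem_setOf_eq, hmemiff (e k) g h hh]
    | succ n ih =>
      intro g h hh
      show selIdx e S (n+1) (g * h) = selIdx e S (n+1) g
      simp only [selIdx]
      congr 1
      ext k
      have : selIdx e S n (g * h) = selIdx e S n g := ih g h hh
      simp only [mem_setOf_eq, hmemiff (e k) g h hh, this]
  -- measurability of the selection
  have mK : ∀ n : ℕ, Measurable (fun g => K n g) := by
    intro n
    induction n with
    | zero =>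
      apply measurable_sInf
      intro k
      exact (((eopen k).mul_right).measurableSet).inter (MeasurableSet.const _)
    | succ n ih =>
      apply measurable_sInf
      intro k
      refine (((eopen k).mul_right).measurableSet).inter (MeasurableSet.inter ?_
        (MeasurableSet.const _))
      exact ih (MeasurableSet.of_discrete (s := {j | closure (e k) ⊆ e j}))
  -- the transversal
  set T : Set G := {g | ∀ n : ℕ, g ∈ e (K n g)} with hT
  have Tmeas : MeasurableSet T := by
    have : T = ⋂ n : ℕ, ⋃ j : ℕ, ((fun g => K n g) ⁻¹' {j}) ∩ e j := by
      ext g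
      simp only [hT, mem_setOf_eq, mem_iInter, mem_iUnion, mem_inter_iff, mem_preimage,
        mem_singleton_iff]
      constructor
      · intro h n; exact ⟨K n g, rfl, h n⟩
      · rintro h n
        obtain ⟨j, hj, hgj⟩ := h n
        rwa [hj]
    rw [this]
    exact MeasurableSet.iInter fun n => MeasurableSet.iUnion fun j =>
      ((mK n (MeasurableSet.of_discrete)).inter (eopen j).measurableSet)
  refine ⟨T, Tmeas, ?_⟩
  -- nesting of the chosen sets
  have mono : ∀ (g : G) (m n : ℕ), m ≤ n → e (K n g) ⊆ e (K m g) := by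
    intro g m n hmn
    induction n with
    | zero => cases Nat.le_zero.1 hmn; exact subset_rfl
    | succ n ih =>
      rcases Nat.lt_or_ge m (n+1) with h | h
      · exact (subset_closure.trans (hclos n g)).trans (ih (Nat.lt_succ_iff.mp h))
      · cases le_antisymm hmn h; exact subset_rfl
  intro g
  -- construct a point of `T` in the coset of `g`
  have hy : ∀ n : ℕ, ∃ a, a ∈ e (K n g) ∧ ∃ h ∈ S, g * h = a := by
    intro n
    obtain ⟨a, ha, s, hs, has⟩ := Set.mem_mul.1 (memS n g)
    exact ⟨a, ha, s⁻¹, hinv s hs, by rw [← has, mul_assoc, mul_inv_cancel, mul_one]⟩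
  choose y hy1 hy2 using hy
  have hcauchy : CauchySeq y := by
    apply cauchySeq_of_le_tendsto_0 (fun n => (1/2 : ℝ) ^ n)
    · intro n m N hn hm
      have h1' : y n ∈ e (K N g) := mono g N n hn (hy1 n)
      have h2' : y m ∈ e (K N g) := mono g N m hm (hy1 m)
      have := (EMetric.edist_le_diam_of_mem h1' h2').trans (hdiam N g)
      exact (edist_le_ofReal (by positivity)).1 this
    · exact tendsto_pow_atTop_nhds_zero_of_lt_one (by norm_num) (by norm_num)
  obtain ⟨t, ht⟩ := cauchySeq_tendsto_of_complete hcauchy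
  -- the limit lies in the coset of `g`
  have hC : IsClosed {z : G | ∃ h ∈ S, g * h = z} := by
    have : {z : G | ∃ h ∈ S, g * h = z} = (fun h => g * h) '' S := by
      ext z
      simp only [Set.mem_image, mem_setOf_eq, exists_prop]
    rw [this]
    exact (Homeomorph.mulLeft g).isClosedMap S hS
  have htC : ∃ h ∈ S, g * h = t :=
    hC.mem_of_tendsto ht (Filter.Eventually.of_forall fun n => hy2 n)
  -- the limit lies in each chosen set
  have htmem : ∀ m : ℕ, t ∈ e (K m g) := by
    intro m
    have : t ∈ closure (e (K (m+1) g)) := by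
      apply mem_closure_of_tendsto ht
      filter_upwards [Filter.eventually_ge_atTop (m+1)] with n hn
      exact mono g (m+1) n hn (hy1 n)
    exact hclos m g this
  have htT : t ∈ T := by
    intro n
    obtain ⟨h, hh, hgh⟩ := htC
    have : K n t = K n g := by rw [← hgh]; exact hcoset n g h hh
    rw [this]; exact htmem n
  refine ⟨t, ⟨htT, htC⟩, ?_⟩
  -- uniqueness
  rintro t' ⟨ht'T, h', hh', hgh'⟩
  obtain ⟨h, hh, hgh⟩ := htC
  have hK' : ∀ n, K n t' = K n t := by
    intro n
    have : t' = t * (h⁻¹ * h') := by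
      rw [← hgh, ← hgh', mul_assoc, ← mul_assoc h, mul_inv_cancel, one_mul]
    rw [this]
    exact hcoset n t (h⁻¹ * h') (hmul _ (hinv h hh) _ hh')
  have : ∀ n : ℕ, dist t' t ≤ (1/2 : ℝ) ^ n := by
    intro n
    have h1' : t' ∈ e (K n t) := by rw [← hK' n]; exact ht'T n
    have h2' : t ∈ e (K n t) := htT n
    have hKt : K n t = K n g := by rw [← hgh]; exact hcoset n g h hh
    rw [hKt] at h1' h2'
    have := (EMetric.edist_le_diam_of_mem h1' h2').trans (hdiam n g)
    exact (edist_le_ofReal (by positivity)).1 this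
  have hd0 : dist t' t ≤ 0 :=
    ge_of_tendsto' (tendsto_pow_atTop_nhds_zero_of_lt_one (by norm_num : (0:ℝ) ≤ 1/2)
      (by norm_num)) this
  exact dist_le_zero.mp hd0

end OrbitBorelAux

/-- If `G` is a Polish group and `X` a Polish `G`-space, then every orbit
`[x]_G = {g • x : g ∈ G}` is a Borel subset of `X`. -/
theorem orbit_measurableSet
    (G : Type*) [Group G] [TopologicalSpace G] [IsTopologicalGroup G] [PolishSpace G]
    (X : Type*) [TopologicalSpace X] [PolishSpace X] [MeasurableSpace X] [BorelSpace X]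
    [MulAction G X] [ContinuousSMul G X] (x : X) :
    MeasurableSet (MulAction.orbit G x) := by
  letI := upgradeIsCompletelyMetrizable G
  borelize G
  have hcont : Continuous fun g : G => g • x := continuous_id.smul continuous_const
  set S : Set G := (MulAction.stabilizer G x : Set G) with hSdef
  have hmemS : ∀ g : G, g ∈ S ↔ g • x = x := fun g => SetLike.mem_coe.trans MulAction.mem_stabilizer_iff
  have hS : IsClosed S := by
    have : S = (fun g : G => g • x) ⁻¹' {x} := by
      ext g; simp [hSdef, MulAction.mem_stabilizer_iff]
    rw [this]; exact isClosed_singleton.preimage hcont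
  obtain ⟨T, Tmeas, hT⟩ := OrbitBorelAux.exists_transversal hS
    ((hmemS 1).2 (one_smul G x))
    (fun a ha b hb => (hmemS _).2 (by rw [mul_smul, (hmemS b).1 hb, (hmemS a).1 ha]))
    (fun a ha => (hmemS _).2 (by
      conv_lhs => rw [← (hmemS a).1 ha]
      rw [← mul_smul, inv_mul_cancel, one_smul]))
  have horb : MulAction.orbit G x = (fun g : G => g • x) '' T := by
    ext y
    constructor
    · rintro ⟨g, rfl⟩
      obtain ⟨t, ⟨tT, h, hh, hgh⟩, -⟩ := hT g
      refine ⟨t, tT, ?_⟩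
      show t • x = g • x
      rw [← hgh, mul_smul, (hmemS h).1 hh]
    · rintro ⟨t, -, rfl⟩
      exact MulAction.mem_orbit x t
  rw [horb]
  apply Tmeas.image_of_continuousOn_injOn hcont.continuousOn
  intro a ha b hb hab
  have hab' : a • x = b • x := hab
  have hmem : a⁻¹ * b ∈ S := by
    rw [hmemS, mul_smul, ← hab', ← mul_smul, inv_mul_cancel, one_smul]
  exact (hT a).unique ⟨ha, 1, (hmemS 1).2 (one_smul G x), mul_one a⟩
    ⟨hb, a⁻¹ * b, hmem, by rw [← mul_assoc, mul_inv_cancel, one_mul]⟩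
end

section
/- Let G be a Polish group, X a Polish G-space, B ⊆ X a Borel set, and U ⊆ G an open set. Then the Vaught transform B^{ΔU} = {x ∈ X : {g ∈ U : g·x ∈ B} is nonmeager in G} is a Borel subset of X. -/
open Set Topology Filter TopologicalSpace

section Aux

variable {α : Type*} [TopologicalSpace α]

lemma my_isOpen_not_isMeagre [BaireSpace α] {U : Set α} (hU : IsOpen U) (hne : U.Nonempty) :
    ¬ IsMeagre U := by
  intro h
  have hd : Dense Uᶜ := dense_of_mem_residual h
  rcases hd.inter_open_nonempty U hU hne with ⟨x, hxU, hxc⟩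
  exact hxc hxU

lemma my_residualEq_diffs {A u : Set α} (h : A =ᶠ[residual α] u) :
    IsMeagre (A \ u) ∧ IsMeagre (u \ A) := by
  have h' : {x | x ∈ A ↔ x ∈ u} ∈ residual α := eventuallyEq_set.mp h
  constructor
  · exact Filter.mem_of_superset h' (fun x hx => by
      simp only [mem_compl_iff, mem_diff]; intro ⟨h1, h2⟩; exact h2 (hx.mp h1))
  · exact Filter.mem_of_superset h' (fun x hx => by
      simp only [mem_compl_iff, mem_diff]; intro ⟨h1, h2⟩; exact h2 (hx.mpr h1))

/-- Localization: for a Baire-measurable `A` and open `U`, the set `U \ A` is nonmeager iff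
`A` is meager on some nonempty basic open subset of `U`. -/
lemma my_nonmeager_diff_iff [BaireSpace α] {A U : Set α} (hA : BaireMeasurableSet A)
    (hU : IsOpen U) {b : Set (Set α)} (hb : IsTopologicalBasis b) :
    ¬ IsMeagre (U \ A) ↔ ∃ V ∈ b, V.Nonempty ∧ V ⊆ U ∧ IsMeagre (A ∩ V) := by
  constructor
  · intro h
    have hUA : BaireMeasurableSet (U \ A) := hU.baireMeasurableSet.diff hA
    obtain ⟨u, huo, hueq⟩ := hUA.residualEq_isOpen
    obtain ⟨hm1, hm2⟩ := my_residualEq_diffs hueq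
    -- u is nonempty
    have hune : u.Nonempty := by
      rcases u.eq_empty_or_nonempty with rfl | hne
      · exact absurd (by simpa using hm1) h
      · exact hne
    -- u ∖ (U∖A) meager, so u∖U and u∩A are meager
    have huU : IsMeagre (u \ U) := hm2.mono (show u \ U ⊆ u \ (U \ A) from fun x hx => ⟨hx.1, fun h' => hx.2 h'.1⟩)
    have huA : IsMeagre (u ∩ A) := hm2.mono (show u ∩ A ⊆ u \ (U \ A) from fun x hx => ⟨hx.1, fun h' => h'.2 hx.2⟩)
    -- u ∩ U is nonempty
    have hne' : (u ∩ U).Nonempty := by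
      by_contra hc
      rw [not_nonempty_iff_eq_empty] at hc
      have hsub : u ⊆ u \ U := fun x hx =>
        ⟨hx, fun hxU => (eq_empty_iff_forall_notMem.mp hc x ⟨hx, hxU⟩)⟩
      exact my_isOpen_not_isMeagre huo hune (huU.mono hsub)
    obtain ⟨x, hx⟩ := hne'
    obtain ⟨V, hVb, hxV, hVsub⟩ := hb.exists_subset_of_mem_open hx (huo.inter hU)
    refine ⟨V, hVb, ⟨x, hxV⟩, fun y hy => (hVsub hy).2, ?_⟩
    exact huA.mono (show A ∩ V ⊆ u ∩ A from fun y hy => ⟨(hVsub hy.2).1, hy.1⟩)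
  · rintro ⟨V, hVb, hVne, hVU, hVA⟩
    intro h
    have hV : ¬ IsMeagre V := my_isOpen_not_isMeagre (hb.isOpen hVb) hVne
    apply hV
    have : V ⊆ (A ∩ V) ∪ (U \ A) := by
      intro y hy
      by_cases hyA : y ∈ A
      · exact Or.inl ⟨hyA, hy⟩
      · exact Or.inr ⟨hVU hy, hyA⟩
    have hun : IsMeagre ((A ∩ V) ∪ (U \ A)) := by
      rw [IsMeagre, compl_union]; exact Filter.inter_mem hVA h
    exact hun.mono this

end Aux

/-- The Vaught transform `B^{ΔU}`: the set of `x` such that `{g ∈ U : g • x ∈ B}` is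
nonmeager in `G`. -/
def vaughtDelta {G X : Type*} [TopologicalSpace G] [SMul G X] (B : Set X) (U : Set G) : Set X :=
  {x : X | ¬ IsMeagre {g : G | g ∈ U ∧ g • x ∈ B}}

/-- The Vaught transform of a Borel set by an open set is Borel. -/
theorem vaughtDelta_measurableSet
    (G : Type*) [Group G] [TopologicalSpace G] [IsTopologicalGroup G] [PolishSpace G]
    (X : Type*) [TopologicalSpace X] [PolishSpace X] [MeasurableSpace X] [BorelSpace X]
    [MulAction G X] [ContinuousSMul G X]
    (B : Set X) (hB : MeasurableSet B) (U : Set G) (hU : IsOpen U) :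
    MeasurableSet (vaughtDelta B U) := by
  letI := upgradeIsCompletelyMetrizable G
  borelize G
  obtain ⟨b, hbc, -, hb⟩ := exists_countable_basis G
  have hcont : ∀ x : X, Continuous (fun g : G => g • x) := fun x =>
    continuous_id.smul continuous_const
  -- the induction
  have key : ∀ ⦃B : Set X⦄, MeasurableSet B →
      (∀ U : Set G, IsOpen U → MeasurableSet (vaughtDelta B U)) := by
    refine MeasurableSet.induction_on_open ?_ ?_ ?_
    · -- open case
      intro s hs U hU
      have : vaughtDelta s U = ⋃ g ∈ U, (fun x : X => g • x) ⁻¹' s := by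
        ext x
        simp only [vaughtDelta, mem_setOf_eq, mem_iUnion, mem_preimage]
        constructor
        · intro h
          by_contra hc
          push_neg at hc
          have : {g : G | g ∈ U ∧ g • x ∈ s} = ∅ := by
            ext g; simp only [mem_setOf_eq, mem_empty_iff_false, iff_false, not_and]
            exact hc g
          exact h (this ▸ IsMeagre.empty)
        · rintro ⟨g, hgU, hgs⟩
          have hopen : IsOpen {g : G | g ∈ U ∧ g • x ∈ s} :=
            hU.inter (hs.preimage (hcont x))
          exact my_isOpen_not_isMeagre hopen ⟨g, hgU, hgs⟩
      rw [this]
      exact (isOpen_biUnion fun g _ => hs.preimage (continuous_const_smul g)).measurableSet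
    · -- complement case
      intro s hs IH U hU
      have hsec : ∀ x : X, BaireMeasurableSet {g : G | g • x ∈ s} := fun x =>
        (hs.preimage (hcont x).measurable).baireMeasurableSet
      have heq : vaughtDelta sᶜ U =
          ⋃ V ∈ {V ∈ b | V.Nonempty ∧ V ⊆ U}, (vaughtDelta s V)ᶜ := by
        ext x
        show ¬ IsMeagre {g : G | g ∈ U ∧ g • x ∈ sᶜ} ↔ _
        have hdiff : {g : G | g ∈ U ∧ g • x ∈ sᶜ} = U \ {g : G | g • x ∈ s} := by
          ext g; simp [Set.mem_diff]
        rw [hdiff, my_nonmeager_diff_iff (hsec x) hU hb]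
        simp only [mem_iUnion, mem_compl_iff, mem_sep_iff, exists_prop, vaughtDelta,
          mem_setOf_eq]
        constructor
        · rintro ⟨V, hVb, hVne, hVU, hVm⟩
          refine ⟨V, ⟨hVb, hVne, hVU⟩, fun hc => hc ?_⟩
          have : {g : G | g ∈ V ∧ g • x ∈ s} = {g : G | g • x ∈ s} ∩ V := by
            ext g; simp [and_comm]
          rw [this]; exact hVm
        · rintro ⟨V, ⟨hVb, hVne, hVU⟩, hVm⟩
          refine ⟨V, hVb, hVne, hVU, ?_⟩
          rw [not_not] at hVm
          have : {g : G | g • x ∈ s} ∩ V = {g : G | g ∈ V ∧ g • x ∈ s} := by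
            ext g; simp [and_comm]
          rw [this]; exact hVm
      rw [heq]
      exact MeasurableSet.biUnion (hbc.mono (sep_subset _ _))
        (fun V hV => (IH V (hb.isOpen hV.1)).compl)
    · -- countable union case
      intro f _ _ IH U hU
      have heq : vaughtDelta (⋃ i, f i) U = ⋃ i, vaughtDelta (f i) U := by
        ext x
        show ¬ IsMeagre {g : G | g ∈ U ∧ g • x ∈ ⋃ i, f i} ↔ _
        have hsec : {g : G | g ∈ U ∧ g • x ∈ ⋃ i, f i} =
            ⋃ i, {g : G | g ∈ U ∧ g • x ∈ f i} := by
          ext g; simp only [mem_setOf_eq, mem_iUnion]; tauto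
        rw [hsec, mem_iUnion]
        constructor
        · intro h
          by_contra hc
          push_neg at hc
          have hc' : ∀ i, IsMeagre {g : G | g ∈ U ∧ g • x ∈ f i} :=
            fun i => not_not.mp (hc i)
          exact h (isMeagre_iUnion hc')
        · rintro ⟨i, hi⟩ h
          exact hi (h.mono
            (subset_iUnion (fun i => {g : G | g ∈ U ∧ g • x ∈ f i}) i))
      rw [heq]
      exact MeasurableSet.iUnion (fun i => IH i U hU)
  exact key hB U hU
end

section
/- There is a Borel function θ : ℝ → 2^ℕ such that for all x₁, x₂ ∈ ℝ: x₁ − x₂ ∈ ℚ if and only if θ(x₁) E₀ θ(x₂). -/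
open Filter

/-- Floor of `n! * x`, as an integer. -/
noncomputable def Ff (n : ℕ) (x : ℝ) : ℤ := ⌊(n.factorial : ℝ) * x⌋

/-- The `n`-th digit of `x` in the factorial number system; an integer in `[0, n]`. -/
noncomputable def Dd (n : ℕ) (x : ℝ) : ℤ := Ff (n+1) x - (n+1) * Ff n x

/-- The reduction: bit `m` records, with `n = √m` and `j = m - n²` (so `0 ≤ j ≤ 2n`),
whether `j < Dd n x`.  This encodes the digit `Dd n x` in unary on positions `n², …, n²+2n`. -/
noncomputable def theta (x : ℝ) (m : ℕ) : Bool :=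
  decide (((m - (Nat.sqrt m)^2 : ℕ) : ℤ) < Dd (Nat.sqrt m) x)

lemma Ff_succ (n : ℕ) (x : ℝ) :
    Ff (n+1) x = ⌊((n : ℝ)+1) * ((n.factorial : ℝ) * x)⌋ := by
  unfold Ff; congr 1; push_cast [Nat.factorial_succ]; ring

lemma Dd_nonneg (n : ℕ) (x : ℝ) : 0 ≤ Dd n x := by
  have h : ((n : ℤ)+1) * Ff n x ≤ Ff (n+1) x := by
    rw [Ff_succ, Int.le_floor]
    push_cast
    exact mul_le_mul_of_nonneg_left (Int.floor_le _) (by positivity)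
  unfold Dd
  omega

lemma Dd_le (n : ℕ) (x : ℝ) : Dd n x ≤ n := by
  have h : Ff (n+1) x < ((n : ℤ)+1) * (Ff n x + 1) := by
    rw [Ff_succ, Int.floor_lt]
    push_cast
    refine mul_lt_mul_of_pos_left (Int.lt_floor_add_one _) (by positivity)
  unfold Dd
  push_cast at h ⊢
  nlinarith [h]

lemma Ff_add_rat (m : ℕ) (x : ℝ) (q : ℚ) (h : q.den ∣ m.factorial) :
    Ff m (x + q) = Ff m x + q.num * (m.factorial / q.den : ℕ) := by
  have hden : ((q.den : ℝ)) ≠ 0 := by exact_mod_cast q.den_nz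
  have hfac : ((m.factorial / q.den : ℕ) : ℝ) * q.den = m.factorial := by
    exact_mod_cast congrArg (Nat.cast : ℕ → ℝ) (Nat.div_mul_cancel h)
  have key : (m.factorial : ℝ) * (x + q) =
      (m.factorial : ℝ) * x + ((q.num * (m.factorial / q.den : ℕ) : ℤ) : ℝ) := by
    rw [Rat.cast_def]
    push_cast
    field_simp
    have hfac' : (((m.factorial : ℤ) / (q.den : ℤ) : ℤ) : ℝ) * q.den = m.factorial := by
      exact_mod_cast hfac
    nlinarith [hfac, hfac', congrArg ((q.num : ℝ) * ·) hfac']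
  unfold Ff
  rw [key, Int.floor_add_intCast]

lemma Dd_add_rat (n : ℕ) (x : ℝ) (q : ℚ) (h : q.den ≤ n) : Dd n (x + q) = Dd n x := by
  have hd : q.den ∣ n.factorial := Nat.dvd_factorial q.pos h
  have hd' : q.den ∣ (n+1).factorial := hd.trans (Nat.factorial_dvd_factorial (Nat.le_succ n))
  have hk : ((n+1).factorial / q.den : ℕ) = (n+1) * (n.factorial / q.den) := by
    rw [Nat.factorial_succ, Nat.mul_div_assoc _ hd]
  unfold Dd
  rw [Ff_add_rat _ _ _ hd, Ff_add_rat _ _ _ hd', hk]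
  push_cast
  ring

lemma measurable_theta : Measurable theta := by
  refine measurable_pi_lambda _ fun m => ?_
  have hD : Measurable (Dd (Nat.sqrt m)) := by
    unfold Dd Ff
    exact ((Int.measurable_floor.comp (measurable_const_mul _)).sub
      ((Int.measurable_floor.comp (measurable_const_mul _)).const_mul _))
  have he : (fun x => theta x m) =
      (fun z : ℤ => decide (((m - (Nat.sqrt m)^2 : ℕ) : ℤ) < z)) ∘ Dd (Nat.sqrt m) := rfl
  rw [he]
  exact Measurable.comp (measurable_from_top (β := Bool)) hD

lemma sqrt_sq_add (n j : ℕ) (hj : j ≤ 2*n) : Nat.sqrt (n^2 + j) = n := by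
  have h1 : n ≤ Nat.sqrt (n^2 + j) := Nat.le_sqrt.2 (by nlinarith)
  have h2 : Nat.sqrt (n^2 + j) < n + 1 := Nat.sqrt_lt.2 (by nlinarith)
  omega

/-- Forward direction: if `x₁ - x₂ = q ∈ ℚ` then the bits agree beyond `q.den²`. -/
lemma theta_eventually_eq (x₂ : ℝ) (q : ℚ) :
    ∀ m > q.den * q.den, theta (x₂ + q) m = theta x₂ m := by
  intro m hm
  have hden : q.den ≤ Nat.sqrt m := Nat.le_sqrt.2 (le_of_lt hm)
  unfold theta
  rw [Dd_add_rat _ _ _ hden]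

/-- Reverse direction: if the bits agree beyond `N`, the digits agree beyond `N`. -/
lemma Dd_eq_of_theta (x₁ x₂ : ℝ) (N : ℕ) (h : ∀ m > N, theta x₁ m = theta x₂ m) :
    ∀ n > N, Dd n x₁ = Dd n x₂ := by
  intro n hn
  have hbit : ∀ j : ℕ, j ≤ 2*n → (((j : ℤ) < Dd n x₁) ↔ ((j : ℤ) < Dd n x₂)) := by
    intro j hj
    have hm : n^2 + j > N := by nlinarith
    have := h (n^2 + j) hm
    rw [theta, theta, sqrt_sq_add n j hj, Nat.add_sub_cancel_left] at this
    simpa using this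
  have h1 := Dd_nonneg n x₁
  have h2 := Dd_nonneg n x₂
  have h3 := Dd_le n x₁
  have h4 := Dd_le n x₂
  rcases lt_trichotomy (Dd n x₁) (Dd n x₂) with h' | h' | h'
  · have hb := (hbit (Dd n x₁).toNat (by omega)).2 (by omega)
    omega
  · exact h'
  · have hb := (hbit (Dd n x₂).toNat (by omega)).1 (by omega)
    omega

lemma Ff_approx (n : ℕ) (x : ℝ) :
    |x - (Ff n x : ℝ) / (n.factorial : ℝ)| ≤ 1 / (n.factorial : ℝ) := by
  have hfac : (0:ℝ) < (n.factorial : ℝ) := by exact_mod_cast n.factorial_pos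
  have h1 : (Ff n x : ℝ) ≤ (n.factorial : ℝ) * x := Int.floor_le _
  have h2 : (n.factorial : ℝ) * x < (Ff n x : ℝ) + 1 := Int.lt_floor_add_one _
  rw [abs_le]
  have h3 : (Ff n x : ℝ) / (n.factorial : ℝ) ≤ x := by
    rw [div_le_iff₀ hfac]; linarith
  have h4 : x < ((Ff n x : ℝ) + 1) / (n.factorial : ℝ) := by
    rw [lt_div_iff₀ hfac]; linarith
  have h5 : ((Ff n x : ℝ) + 1) / (n.factorial : ℝ) =
      (Ff n x : ℝ) / (n.factorial : ℝ) + 1 / (n.factorial : ℝ) := by ring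
  have h6 : (0:ℝ) < 1 / (n.factorial : ℝ) := by positivity
  constructor <;> [linarith; linarith]

/-- If the digits of `x₁` and `x₂` agree from `M` on, then `x₁ - x₂` is rational. -/
lemma rational_of_Dd_eq (x₁ x₂ : ℝ) (N : ℕ) (h : ∀ n > N, Dd n x₁ = Dd n x₂) :
    ∃ q : ℚ, (q : ℝ) = x₁ - x₂ := by
  set M := N + 1 with hM
  set A : ℤ := Ff M x₁ - Ff M x₂ with hA
  refine ⟨(A : ℚ) / (M.factorial : ℚ), ?_⟩
  have hfacM : (0:ℝ) < (M.factorial : ℝ) := by exact_mod_cast M.factorial_pos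
  -- the scaled difference of floors is constant from M on
  have key : ∀ n, M ≤ n → ((Ff n x₁ - Ff n x₂ : ℤ) : ℝ) * (M.factorial : ℝ) =
      (A : ℝ) * (n.factorial : ℝ) := by
    intro n hn
    induction n, hn using Nat.le_induction with
    | base => rw [hA]
    | succ n hn ih =>
      have hD : Dd n x₁ = Dd n x₂ := h n (by omega)
      have h1 : Ff (n+1) x₁ - Ff (n+1) x₂ = (n+1) * (Ff n x₁ - Ff n x₂) := by
        have e1 : Ff (n+1) x₁ = Dd n x₁ + (n+1) * Ff n x₁ := by unfold Dd; ring
        have e2 : Ff (n+1) x₂ = Dd n x₂ + (n+1) * Ff n x₂ := by unfold Dd; ring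
        rw [e1, e2, hD]; ring
      rw [h1]
      have hMF : ((M.factorial : ℕ) : ℝ) = ((N:ℝ)+1) * (N.factorial : ℝ) := by
        rw [hM]; push_cast [Nat.factorial_succ]; ring
      push_cast [Nat.factorial_succ]
      push_cast at ih
      rw [hMF] at ih ⊢
      linear_combination ((n:ℝ)+1) * ih
  -- hence the difference is within 2/n! of A/M! for all n ≥ M
  have hbound : ∀ n, M ≤ n → |x₁ - x₂ - (A : ℝ) / (M.factorial : ℝ)| ≤
      2 / (n.factorial : ℝ) := by
    intro n hn
    have hfac : (0:ℝ) < (n.factorial : ℝ) := by exact_mod_cast n.factorial_pos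
    have hAe : (A : ℝ) / (M.factorial : ℝ) = ((Ff n x₁ - Ff n x₂ : ℤ) : ℝ) / (n.factorial : ℝ) := by
      rw [div_eq_div_iff hfacM.ne' hfac.ne']
      linear_combination -(key n hn)
    rw [hAe]
    have e : x₁ - x₂ - ((Ff n x₁ - Ff n x₂ : ℤ) : ℝ) / (n.factorial : ℝ) =
        (x₁ - (Ff n x₁ : ℝ) / (n.factorial : ℝ)) - (x₂ - (Ff n x₂ : ℝ) / (n.factorial : ℝ)) := by
      push_cast
      field_simp
      ring
    rw [e]
    calc |(x₁ - (Ff n x₁ : ℝ) / (n.factorial : ℝ)) - (x₂ - (Ff n x₂ : ℝ) / (n.factorial : ℝ))|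
        ≤ |x₁ - (Ff n x₁ : ℝ) / (n.factorial : ℝ)| + |x₂ - (Ff n x₂ : ℝ) / (n.factorial : ℝ)| :=
          abs_sub _ _
      _ ≤ 1 / (n.factorial : ℝ) + 1 / (n.factorial : ℝ) := by
          exact add_le_add (Ff_approx n x₁) (Ff_approx n x₂)
      _ = 2 / (n.factorial : ℝ) := by ring
  -- take limits
  have hfactendsto : Tendsto (fun n : ℕ => (n.factorial : ℝ)) atTop atTop :=
    tendsto_natCast_atTop_atTop.comp
      (tendsto_atTop_mono (fun n => Nat.self_le_factorial n) tendsto_id)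
  have htends : Tendsto (fun n : ℕ => 2 / (n.factorial : ℝ)) atTop (nhds 0) :=
    Tendsto.div_atTop tendsto_const_nhds hfactendsto
  have hle : |x₁ - x₂ - (A : ℝ) / (M.factorial : ℝ)| ≤ 0 := by
    refine ge_of_tendsto htends ?_
    filter_upwards [eventually_ge_atTop M] with n hn using hbound n hn
  have : x₁ - x₂ - (A : ℝ) / (M.factorial : ℝ) = 0 := by
    have := abs_nonneg (x₁ - x₂ - (A : ℝ) / (M.factorial : ℝ))
    have habs : |x₁ - x₂ - (A : ℝ) / (M.factorial : ℝ)| = 0 := le_antisymm hle this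
    exact abs_eq_zero.1 habs
  push_cast
  linarith

/-- There is a Borel reduction of the Vitali equivalence relation on `ℝ` to the
equivalence relation `E₀` of eventual agreement on `2^ℕ`. -/
theorem vitali_borel_reduces_to_E0 :
    ∃ θ : ℝ → (ℕ → Bool), Measurable θ ∧
      ∀ x₁ x₂ : ℝ, (∃ q : ℚ, (q : ℝ) = x₁ - x₂) ↔ ∃ N : ℕ, ∀ n > N, θ x₁ n = θ x₂ n := by
  refine ⟨theta, measurable_theta, fun x₁ x₂ => ⟨?_, ?_⟩⟩
  · rintro ⟨q, hq⟩
    refine ⟨q.den * q.den, fun m hm => ?_⟩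
    have hx : x₁ = x₂ + (q : ℝ) := by linarith
    rw [hx]
    exact theta_eventually_eq x₂ q m hm
  · rintro ⟨N, hN⟩
    exact rational_of_Dd_eq x₁ x₂ N (Dd_eq_of_theta x₁ x₂ N hN)
end

section
/- Let G be a topological group and let d₁, d₂ be two compatible left-invariant metrics on G (metrics inducing the topology of G with dᵢ(g·h₁, g·h₂) = dᵢ(h₁, h₂) for all g, h₁, h₂ ∈ G, i = 1, 2). If d₁ is a complete metric, then d₂ is a complete metric. -/
/-- The uniformity of a left-invariant metric is determined by the neighborhood filter of 1
in its own topology. -/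
lemma leftInvariant_uniformity_eq
    (G : Type*) [Group G] (m : MetricSpace G)
    (hinv : ∀ g h₁ h₂ : G, m.dist (g * h₁) (g * h₂) = m.dist h₁ h₂) :
    m.toUniformSpace.uniformity =
      Filter.comap (fun p : G × G => p.1⁻¹ * p.2)
        (@nhds G m.toUniformSpace.toTopologicalSpace 1) := by
  letI := m
  have h1 : ∀ x y : G, m.dist x y = m.dist (x⁻¹ * y) 1 := by
    intro x y
    rw [m.dist_comm (x⁻¹ * y) 1, ← hinv x⁻¹ x y, inv_mul_cancel]
  have hsets : ∀ ε : ℝ,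
      (fun p : G × G => p.1⁻¹ * p.2) ⁻¹' Metric.ball (1 : G) ε
        = {p : G × G | m.dist p.1 p.2 < ε} := by
    intro ε
    ext p
    simp [Metric.ball, h1 p.1 p.2]
  refine Eq.symm ?_
  refine Filter.HasBasis.eq_of_same_basis ?_ Metric.uniformity_basis_dist
  have := (Metric.nhds_basis_ball (x := (1 : G))).comap
    (fun p : G × G => p.1⁻¹ * p.2)
  exact this.congr (fun _ => Iff.rfl) (fun ε _ => hsets ε)

/-- If a topological group has two compatible left-invariant metrics and one of them is
complete, then so is the other. -/
theorem complete_of_complete_left_invariant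
    (G : Type*) [Group G] [TopologicalSpace G] [IsTopologicalGroup G]
    (m₁ m₂ : MetricSpace G)
    (hcompat₁ : m₁.toUniformSpace.toTopologicalSpace = ‹TopologicalSpace G›)
    (hcompat₂ : m₂.toUniformSpace.toTopologicalSpace = ‹TopologicalSpace G›)
    (hinv₁ : ∀ g h₁ h₂ : G, m₁.dist (g * h₁) (g * h₂) = m₁.dist h₁ h₂)
    (hinv₂ : ∀ g h₁ h₂ : G, m₂.dist (g * h₁) (g * h₂) = m₂.dist h₁ h₂)
    (hc : @CompleteSpace G m₁.toUniformSpace) :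
    @CompleteSpace G m₂.toUniformSpace := by
  have h1 := leftInvariant_uniformity_eq G m₁ hinv₁
  have h2 := leftInvariant_uniformity_eq G m₂ hinv₂
  rw [hcompat₁] at h1
  rw [hcompat₂] at h2
  have : m₁.toUniformSpace = m₂.toUniformSpace :=
    UniformSpace.ext (h1.trans h2.symm)
  rwa [this] at hc
end

section
/- Let G be a subgroup of the group of all permutations of ℕ, where the permutation group carries the topology induced by the embedding g ↦ (g, g⁻¹) into (ℕ → ℕ) × (ℕ → ℕ) with the product topology (ℕ discrete). Then G is closed in this topology if and only if there exist a countable relational first-order language L and an L-structure M with underlying set ℕ such that G = {g : g is an automorphism of M}. -/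
/-- The Polish topology on the group of all permutations of `ℕ`, induced by the embedding
`g ↦ (g, g⁻¹)` into `(ℕ → ℕ) × (ℕ → ℕ)` with the product topology (`ℕ` discrete). -/
def permTopology : TopologicalSpace (Equiv.Perm ℕ) :=
  TopologicalSpace.induced
    (fun g : Equiv.Perm ℕ => ((g : ℕ → ℕ), (g.symm : ℕ → ℕ))) inferInstance

open FirstOrder Language Structure Topology

/-- The canonical language for a subgroup of permutations: an `n`-ary relation symbol for
each `n`-tuple of naturals. -/
abbrev permLang : FirstOrder.Language.{0, 0} := ⟨fun _ => Empty, fun n => Fin n → ℕ⟩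

/-- The canonical structure: each tuple names its orbit under the subgroup. -/
def permStruct (G : Subgroup (Equiv.Perm ℕ)) : permLang.Structure ℕ :=
  ⟨fun f => isEmptyElim f, fun {n} r y => ∃ h : Equiv.Perm ℕ, h ∈ G ∧ ⇑h ∘ r = y⟩

/-- Auxiliary: a sufficient criterion for membership in the closure of a set of
permutations in the Polish topology. -/
lemma mem_closure_perm (G : Set (Equiv.Perm ℕ)) (g : Equiv.Perm ℕ)
    (H : ∀ K : Finset ℕ, ∃ h ∈ G, ∀ a ∈ K, h a = g a) :
    g ∈ @closure _ permTopology G := by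
  letI : TopologicalSpace (Equiv.Perm ℕ) := permTopology
  rw [mem_closure_iff_nhds]
  intro t ht
  rw [permTopology, nhds_induced, Filter.mem_comap] at ht
  obtain ⟨s, hs, hsub⟩ := ht
  rw [nhds_prod_eq, Filter.mem_prod_iff] at hs
  obtain ⟨u, hu, v, hv, huv⟩ := hs
  rw [nhds_pi, Filter.mem_pi] at hu hv
  obtain ⟨I, hIfin, su, hsu, hIu⟩ := hu
  obtain ⟨J, hJfin, sv, hsv, hJv⟩ := hv
  obtain ⟨h, hG, hag⟩ := H (hIfin.toFinset ∪ hJfin.toFinset.image g.symm)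
  refine ⟨h, hsub ?_, hG⟩
  have hinv : ∀ j ∈ J, h.symm j = g.symm j := by
    intro j hj
    have h1 : h (g.symm j) = j := by
      rw [hag (g.symm j) (by simp [hj]), Equiv.apply_symm_apply]
    have h2 := congrArg h.symm h1
    rw [Equiv.symm_apply_apply] at h2
    exact h2.symm
  refine huv ⟨hIu fun i hi => ?_, hJv fun j hj => ?_⟩
  · have : (⇑h : ℕ → ℕ) i = g i := hag i (by simp [hi])
    have hgi : (⇑g : ℕ → ℕ) i ∈ su i := mem_nhds_discrete.mp (hsu i)
    simpa [this] using hgi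
  · have : (⇑h.symm : ℕ → ℕ) j = g.symm j := hinv j hj
    have hgj : (⇑g.symm : ℕ → ℕ) j ∈ sv j := mem_nhds_discrete.mp (hsv j)
    simpa [this] using hgj

/-- Auxiliary: each basic relation-preservation condition cuts out a closed set. -/
lemma isClosed_relCondition {L : FirstOrder.Language.{0, 0}} (S : L.Structure ℕ) {n : ℕ}
    (r : L.Relations n) (x : Fin n → ℕ) :
    @IsClosed _ permTopology {g : Equiv.Perm ℕ | RelMap r (⇑g ∘ x) ↔ RelMap r x} := by
  letI : TopologicalSpace (Equiv.Perm ℕ) := permTopology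
  have hj : Continuous (fun g : Equiv.Perm ℕ => ((g : ℕ → ℕ), (g.symm : ℕ → ℕ))) :=
    continuous_induced_dom
  have hc : Continuous (fun g : Equiv.Perm ℕ => (fun i => g (x i) : Fin n → ℕ)) :=
    continuous_pi fun i => (continuous_apply (x i)).comp (continuous_fst.comp hj)
  have : {g : Equiv.Perm ℕ | RelMap r (⇑g ∘ x) ↔ RelMap r x} =
      (fun g : Equiv.Perm ℕ => (fun i => g (x i) : Fin n → ℕ)) ⁻¹'
        {y : Fin n → ℕ | RelMap r y ↔ RelMap r x} := rfl
  rw [this]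
  exact (isClosed_discrete _).preimage hc

/-- A subgroup of `S∞` is closed if and only if it is the automorphism group of a
structure on `ℕ` for a countable relational first-order language. -/
theorem closed_subgroup_iff_automorphism_group (G : Subgroup (Equiv.Perm ℕ)) :
    @IsClosed (Equiv.Perm ℕ) permTopology (G : Set (Equiv.Perm ℕ)) ↔
      ∃ L : FirstOrder.Language.{0, 0}, Countable L.Symbols ∧ L.IsRelational ∧
        ∃ S : L.Structure ℕ, (G : Set (Equiv.Perm ℕ)) =
          {g : Equiv.Perm ℕ | ∃ e : @FirstOrder.Language.Equiv L ℕ ℕ S S, e.toEquiv = g} := by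
  letI : TopologicalSpace (Equiv.Perm ℕ) := permTopology
  constructor
  · intro hG
    letI : permLang.Structure ℕ := permStruct G
    refine ⟨permLang, inferInstance, fun _ => inferInstance, permStruct G, ?_⟩
    ext g
    simp only [SetLike.mem_coe, Set.mem_setOf_eq]
    constructor
    · intro hg
      refine ⟨⟨g, fun f => isEmptyElim f, fun {n} r y => ?_⟩, rfl⟩
      show (∃ h : Equiv.Perm ℕ, h ∈ G ∧ ⇑h ∘ r = ⇑g ∘ y) ↔
        ∃ h : Equiv.Perm ℕ, h ∈ G ∧ ⇑h ∘ r = y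
      constructor
      · rintro ⟨h, hh, heq⟩
        refine ⟨g⁻¹ * h, mul_mem (inv_mem hg) hh, ?_⟩
        have : (⇑(g⁻¹ * h) : ℕ → ℕ) = ⇑g⁻¹ ∘ ⇑h := rfl
        rw [this, Function.comp_assoc, heq]
        ext i
        simp
      · rintro ⟨h, hh, heq⟩
        refine ⟨g * h, mul_mem hg hh, ?_⟩
        have : (⇑(g * h) : ℕ → ℕ) = ⇑g ∘ ⇑h := rfl
        rw [this, Function.comp_assoc, heq]
    · rintro ⟨e, he⟩
      have key : ∀ {n : ℕ} (x : Fin n → ℕ), ∃ h : Equiv.Perm ℕ, h ∈ G ∧ ⇑h ∘ x = ⇑g ∘ x := by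
        intro n x
        have h1 : ∃ h : Equiv.Perm ℕ, h ∈ G ∧ ⇑h ∘ x = x := ⟨1, one_mem G, rfl⟩
        have h2 : ∃ h : Equiv.Perm ℕ, h ∈ G ∧ ⇑h ∘ x = e.toFun ∘ x :=
          (e.map_rel' x x).mpr h1
        have hee : (e.toFun : ℕ → ℕ) = ⇑g := by rw [← he]; rfl
        rwa [hee] at h2
      have hcl : g ∈ closure (G : Set (Equiv.Perm ℕ)) := by
        apply mem_closure_perm
        intro K
        obtain ⟨h, hh, heq⟩ := key (fun i : Fin K.card => (K.orderIsoOfFin rfl i : ℕ))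
        refine ⟨h, hh, fun a ha => ?_⟩
        have := congrFun heq ((K.orderIsoOfFin rfl).symm ⟨a, ha⟩)
        simp only [Function.comp_apply, OrderIso.apply_symm_apply] at this
        exact this
      rwa [hG.closure_eq] at hcl
  · rintro ⟨L, -, hrel, S, hS⟩
    rw [hS]
    have heq : {g : Equiv.Perm ℕ | ∃ e : @FirstOrder.Language.Equiv L ℕ ℕ S S, e.toEquiv = g} =
        ⋂ (n : ℕ), ⋂ (r : L.Relations n), ⋂ (x : Fin n → ℕ),
          {g : Equiv.Perm ℕ | RelMap r (⇑g ∘ x) ↔ RelMap r x} := by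
      ext g
      simp only [Set.mem_setOf_eq, Set.mem_iInter]
      constructor
      · rintro ⟨e, he⟩ n r x
        have := e.map_rel' r x
        have hee : (⇑e : ℕ → ℕ) = ⇑g := by rw [← he]; rfl
        rwa [show (e.toFun : ℕ → ℕ) = ⇑e from rfl, hee] at this
      · intro hg
        exact ⟨⟨g, fun {n} f _ => (hrel n).elim f, fun {n} r x => hg n r x⟩, rfl⟩
    rw [heq]
    exact isClosed_iInter fun n => isClosed_iInter fun r => isClosed_iInter fun x =>
      isClosed_relCondition S r x
end

section
/- If A ⊆ ℝ is Lebesgue measurable and invariant under all rational translations (i.e. q + A = A for every q ∈ ℚ), then either A is Lebesgue null or ℝ ∖ A is Lebesgue null. -/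
open MeasureTheory Set Filter Pointwise
open scoped symmDiff

/-- A Lebesgue measurable subset of `ℝ` invariant under all rational translations is
either null or conull. -/
theorem rational_translation_invariant_null_or_conull
    (A : Set ℝ) (hA : MeasureTheory.NullMeasurableSet A MeasureTheory.volume)
    (hinv : ∀ q : ℚ, (fun x : ℝ => (q : ℝ) + x) '' A = A) :
    MeasureTheory.volume A = 0 ∨ MeasureTheory.volume Aᶜ = 0 := by
  classical
  have hq : ∀ (q : ℚ) (x : ℝ), (q : ℝ) + x ∈ A ↔ x ∈ A := by
    intro q x
    constructor
    · intro h
      conv at h => rw [← hinv q]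
      obtain ⟨a, ha, hax⟩ := h
      have : a = x := by exact_mod_cast add_left_cancel hax
      rwa [← this]
    · intro h
      conv => rw [← hinv q]
      exact ⟨x, h, rfl⟩
  have hZ : ∀ (n : ℤ) (x : ℝ), (n : ℝ) + x ∈ A ↔ x ∈ A := by
    intro n x
    simpa using hq (n : ℚ) x
  set π : ℝ → AddCircle (1 : ℝ) := ((↑) : ℝ → AddCircle (1 : ℝ)) with hπdef
  set B : Set (AddCircle (1 : ℝ)) := π '' A with hBdef
  have hπcont : Continuous π := continuous_quotient_mk'
  have hπsurj : Function.Surjective π := Quotient.exists_rep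
  have hpre : π ⁻¹' B = A := by
    ext x
    simp only [mem_preimage, hBdef]
    constructor
    · rintro ⟨a, ha, hax⟩
      have : -a + x ∈ AddSubgroup.zmultiples (1 : ℝ) := by
        rwa [← QuotientAddGroup.eq]
      obtain ⟨n, hn⟩ := this
      have hx : x = (n : ℝ) + a := by
        have : (n : ℝ) = -a + x := by rw [← hn]; simp
        linarith [this]
      rw [hx]
      exact (hZ n a).mpr ha
    · intro h
      exact ⟨x, h, rfl⟩
  -- characterization of membership in B via representative
  set me := AddCircle.measurableEquivIoc (1 : ℝ) 0 with hme
  have hrep : ∀ x : AddCircle (1 : ℝ), π ((me x : ℝ)) = x := by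
    intro x
    exact (AddCircle.measurableEquivIoc (1:ℝ) 0).toEquiv.symm_apply_apply x
  have hmemB : ∀ x : AddCircle (1 : ℝ), x ∈ B ↔ (me x : ℝ) ∈ A := by
    intro x
    rw [← hpre]
    constructor
    · intro hx; show π _ ∈ B; rw [hrep]; exact hx
    · intro hx; rw [← hrep x]; exact hx
  -- B is null measurable
  obtain ⟨t, htm, hAt⟩ := hA
  set B' : Set (AddCircle (1 : ℝ)) := me ⁻¹' (Subtype.val ⁻¹' t) with hB'def
  have hB'm : MeasurableSet B' := me.measurable (measurable_subtype_coe htm)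
  have hNull : volume (A ∆ t) = 0 := measure_symmDiff_eq_zero_iff.mpr hAt
  set N := toMeasurable volume (A ∆ t) with hNdef
  have hNm : MeasurableSet N := measurableSet_toMeasurable _ _
  have hN0 : volume N = 0 := by rw [measure_toMeasurable]; exact hNull
  set C : Set (AddCircle (1 : ℝ)) := me ⁻¹' (Subtype.val ⁻¹' N) with hCdef
  have hCm : MeasurableSet C := me.measurable (measurable_subtype_coe hNm)
  have hmemB' : ∀ x : AddCircle (1 : ℝ), x ∈ B' ↔ (me x : ℝ) ∈ t := fun x => Iff.rfl
  have hsub : B ∆ B' ⊆ C := by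
    intro x hx
    have : (me x : ℝ) ∈ A ∆ t := by
      rcases hx with ⟨hx1, hx2⟩ | ⟨hx1, hx2⟩
      · exact Or.inl ⟨(hmemB x).mp hx1, fun h => hx2 ((hmemB' x).mpr h)⟩
      · exact Or.inr ⟨(hmemB' x).mp hx1, fun h => hx2 ((hmemB x).mpr h)⟩
    exact subset_toMeasurable _ _ this
  have hmerep : ∀ (x : ℝ) (hx : x ∈ Ioc (0:ℝ) (0 + 1)), me (π x) = ⟨x, hx⟩ := by
    intro x hx
    have h1 : (AddCircle.equivIoc (1:ℝ) 0) (π x) = ⟨x, hx⟩ := by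
      rw [Equiv.apply_eq_iff_eq_symm_apply]
      rfl
    exact h1
  have hC0 : volume C = 0 := by
    rw [AddCircle.add_projection_respects_measure (T := (1:ℝ)) 0 hCm]
    refine measure_mono_null ?_ hN0
    intro x hx
    obtain ⟨hx1, hx2⟩ := hx
    have := hmerep x hx2
    have hx1' : (me (π x) : ℝ) ∈ N := hx1
    rwa [this] at hx1'
  have hBB' : B =ᵐ[volume] B' :=
    measure_symmDiff_eq_zero_iff.mp (measure_mono_null hsub hC0)
  have hBnm : NullMeasurableSet B volume := hB'm.nullMeasurableSet.congr hBB'.symm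
  -- B is invariant under a dense set of translations
  have hinvB : ∀ q : ℚ, (fun x => π (q : ℝ) +ᵥ x) ⁻¹' B = B := by
    intro q
    have : π ⁻¹' ((fun x => π (q : ℝ) +ᵥ x) ⁻¹' B) = π ⁻¹' B := by
      ext x
      simp only [mem_preimage, hpre]
      have : π (q : ℝ) +ᵥ π x = π ((q : ℝ) + x) := rfl
      rw [this]
      show (q : ℝ) + x ∈ π ⁻¹' B ↔ _
      rw [hpre]
      exact hq q x
    exact hπsurj.preimage_injective this
  have hdense : Dense {g : AddCircle (1 : ℝ) | (fun x => g +ᵥ x) ⁻¹' B = B} := by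
    have h1 : DenseRange ((↑) : ℚ → ℝ) := Rat.denseRange_cast
    have h2 : DenseRange π := hπsurj.denseRange
    have h3 : DenseRange (π ∘ ((↑) : ℚ → ℝ)) := h2.comp h1 hπcont
    refine Dense.mono ?_ h3
    rintro _ ⟨q, rfl⟩
    exact hinvB q
  have hconst : EventuallyConst B (ae volume) :=
    aeconst_of_dense_setOf_preimage_vadd_eq hBnm hdense
  -- transfer back to ℝ
  have key : ∀ S : Set ℝ, (∀ (n : ℤ) (x : ℝ), (n : ℝ) + x ∈ S ↔ x ∈ S) →
      volume (S ∩ Ioc (0:ℝ) (0 + 1)) = 0 → volume S = 0 := by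
    intro S hS h0
    refine (isAddFundamentalDomain_Ioc zero_lt_one 0 volume).measure_zero_of_invariant S ?_ h0
    intro g
    ext x
    obtain ⟨n, hn⟩ := g.2
    have hg : (g : ℝ) = (n : ℝ) := by rw [← hn]; simp
    constructor
    · rintro ⟨y, hy, rfl⟩
      show (g : ℝ) + y ∈ S
      rw [hg]
      exact (hS n y).mpr hy
    · intro hx
      refine ⟨-(g : ℝ) + x, ?_, show (g : ℝ) + (-(g : ℝ) + x) = x by ring⟩
      have he : ((n : ℝ)) + (-(g : ℝ) + x) = x := by rw [hg]; ring
      exact (hS n _).mp (by rwa [he])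
  have hmp := (AddCircle.measurePreserving_mk (1:ℝ) 0).measure_preimage hBnm
  rw [Measure.restrict_apply' measurableSet_Ioc, hpre] at hmp
  have hmpc := (AddCircle.measurePreserving_mk (1:ℝ) 0).measure_preimage hBnm.compl
  rw [Measure.restrict_apply' measurableSet_Ioc, preimage_compl, hpre] at hmpc
  rcases eventuallyConst_set'.mp hconst with h | h
  · left
    have hB0 : volume B = 0 := ae_eq_empty.mp h
    exact key A hZ (by rw [hmp, hB0])
  · right
    have hB0 : volume Bᶜ = 0 := ae_eq_univ.mp h
    refine key Aᶜ (fun n x => not_iff_not.mpr (hZ n x)) ?_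
    rw [hmpc, hB0]
end

section
/- There is no Borel function θ : 2^ℕ → 2^ℕ such that for all x, y ∈ 2^ℕ: x E₀ y if and only if θ(x) = θ(y). -/
open MeasureTheory ProbabilityTheory Filter Set

namespace E0Impl

abbrev G := ℕ → ZMod 2

noncomputable def mu : Measure G := Measure.addHaarMeasure ⊤

instance : mu.IsAddLeftInvariant := by unfold mu; infer_instance

instance : IsProbabilityMeasure mu :=
  ⟨by rw [mu, ← TopologicalSpace.PositiveCompacts.coe_top]; exact Measure.addHaarMeasure_self⟩

lemma measurableSet_cyl (s : Finset ℕ) (f : ℕ → ZMod 2) :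
    MeasurableSet {x : G | ∀ i ∈ s, x i = f i} := by
  have h : {x : G | ∀ i ∈ s, x i = f i} = ⋂ i ∈ s, (fun x : G => x i) ⁻¹' {f i} := by
    ext x; simp
  rw [h]
  exact MeasurableSet.biInter s.countable_toSet fun i _ => (measurable_pi_apply i) trivial

lemma mu_cyl (s : Finset ℕ) (f : ℕ → ZMod 2) :
    mu {x : G | ∀ i ∈ s, x i = f i} = (2 : ENNReal)⁻¹ ^ s.card := by
  classical
  induction s using Finset.induction with
  | empty => simp
  | @insert j s hj ih =>
    set A : Set G := {x : G | ∀ i ∈ s, x i = f i} with hA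
    have hAm := measurableSet_cyl s f
    -- the two halves of A according to coordinate j
    have key : ∀ c : ZMod 2,
        mu (A ∩ {x : G | x j = c + 1}) = mu (A ∩ {x : G | x j = c}) := by
      intro c
      have hpre : ((Pi.single j 1 : G) + ·) ⁻¹' (A ∩ {x : G | x j = c})
          = A ∩ {x : G | x j = c + 1} := by
        ext x
        simp only [Set.mem_preimage, Set.mem_inter_iff, Set.mem_setOf_eq, hA, Pi.add_apply]
        have fact : ∀ a c : ZMod 2, 1 + a = c ↔ a = c + 1 := by decide
        constructor
        · rintro ⟨h1, h2⟩
          refine ⟨fun i hi => ?_, ?_⟩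
          · have hij : i ≠ j := by rintro rfl; exact hj hi
            have := h1 i hi
            rwa [Pi.single_eq_of_ne hij, zero_add] at this
          · rw [Pi.single_eq_same] at h2
            exact (fact _ _).1 h2
        · rintro ⟨h1, h2⟩
          refine ⟨fun i hi => ?_, ?_⟩
          · have hij : i ≠ j := by rintro rfl; exact hj hi
            rw [Pi.single_eq_of_ne hij, zero_add]; exact h1 i hi
          · rw [Pi.single_eq_same]
            exact (fact _ _).2 h2
      rw [← hpre, measure_preimage_add]
    have hsplit : mu (A ∩ {x : G | x j = f j}) + mu (A ∩ {x : G | x j = f j + 1}) = mu A := by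
      rw [← measure_union]
      · congr 1
        ext x
        simp only [Set.mem_union, Set.mem_inter_iff, Set.mem_setOf_eq]
        constructor
        · rintro (⟨h, -⟩ | ⟨h, -⟩) <;> exact h
        · intro h
          have : x j = f j ∨ x j = f j + 1 := by
            have : ∀ a b : ZMod 2, a = b ∨ a = b + 1 := by decide
            exact this _ _
          rcases this with h' | h'
          · exact Or.inl ⟨h, h'⟩
          · exact Or.inr ⟨h, h'⟩
      · rw [Set.disjoint_left]
        rintro x ⟨-, h1⟩ ⟨-, h2⟩
        simp only [Set.mem_setOf_eq] at h1 h2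
        have : ∀ b : ZMod 2, b ≠ b + 1 := by decide
        exact this (f j) (h1.symm.trans h2)
      · exact hAm.inter ((measurable_pi_apply j) (MeasurableSet.singleton _))
    have heq := key (f j)
    have hval : mu (A ∩ {x : G | x j = f j}) = (2 : ENNReal)⁻¹ ^ s.card * 2⁻¹ := by
      have h2 : mu (A ∩ {x : G | x j = f j}) + mu (A ∩ {x : G | x j = f j}) = mu A := by
        rw [← heq] at hsplit ⊢
        -- hsplit : mu (A ∩ {xj = fj}) + mu (A ∩ {xj = fj+1}) = mu A, heq rewritten
        exact hsplit
      have hne : mu (A ∩ {x : G | x j = f j}) ≠ ⊤ := measure_ne_top _ _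
      have : (2 : ENNReal) * mu (A ∩ {x : G | x j = f j}) = mu A := by
        rw [two_mul]; exact h2
      rw [ih] at this
      calc mu (A ∩ {x : G | x j = f j})
          = (2 : ENNReal)⁻¹ * (2 * mu (A ∩ {x : G | x j = f j})) := by
            rw [← mul_assoc, ENNReal.inv_mul_cancel (by norm_num) (by norm_num), one_mul]
        _ = (2 : ENNReal)⁻¹ ^ s.card * 2⁻¹ := by rw [this]; ring
    have hset : {x : G | ∀ i ∈ insert j s, x i = f i} = A ∩ {x : G | x j = f j} := by
      ext x
      simp only [Finset.mem_insert, Set.mem_inter_iff, Set.mem_setOf_eq, hA]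
      constructor
      · intro h; exact ⟨fun i hi => h i (Or.inr hi), h j (Or.inl rfl)⟩
      · rintro ⟨h1, h2⟩ i (rfl | hi)
        · exact h2
        · exact h1 i hi
    rw [hset, hval, Finset.card_insert_of_notMem hj, pow_succ]

lemma mu_eval (n : ℕ) (c : ZMod 2) : mu {x : G | x n = c} = (2 : ENNReal)⁻¹ := by
  have h := mu_cyl {n} (fun _ => c)
  simpa using h

noncomputable def coordSA (n : ℕ) : MeasurableSpace G :=
  MeasurableSpace.comap (fun x : G => x n) inferInstance

lemma coordSA_le (n : ℕ) : coordSA n ≤ (inferInstance : MeasurableSpace G) :=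
  (measurable_pi_apply n).comap_le

def piSys (n : ℕ) : Set (Set G) := {S | ∃ c : ZMod 2, S = (fun x : G => x n) ⁻¹' {c}}

lemma isPiSystem_piSys (n : ℕ) : IsPiSystem (piSys n) := by
  rintro S ⟨c, rfl⟩ T ⟨d, rfl⟩ hne
  rcases hne with ⟨x, hx1, hx2⟩
  simp only [Set.mem_preimage, Set.mem_singleton_iff] at hx1 hx2
  have : c = d := hx1 ▸ hx2
  subst this
  exact ⟨c, by simp⟩

lemma coordSA_eq (n : ℕ) : coordSA n = MeasurableSpace.generateFrom (piSys n) := by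
  apply le_antisymm
  · rintro S ⟨t, -, rfl⟩
    have h : (fun x : G => x n) ⁻¹' t = ⋃ c ∈ t, (fun x : G => x n) ⁻¹' {c} := by
      ext x; simp
    rw [h]
    exact MeasurableSet.biUnion t.to_countable
      (fun c _ => MeasurableSpace.measurableSet_generateFrom ⟨c, rfl⟩)
  · apply MeasurableSpace.generateFrom_le
    rintro S ⟨c, rfl⟩
    exact ⟨{c}, trivial, rfl⟩

lemma iIndep_coord : iIndep coordSA mu := by
  classical
  apply iIndepSets.iIndep coordSA_le piSys isPiSystem_piSys coordSA_eq
  rw [iIndepSets_iff]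
  intro s f hf
  have hg : ∀ i ∈ s, ∃ c : ZMod 2, f i = (fun x : G => x i) ⁻¹' {c} := fun i hi => hf i hi
  set gc : ℕ → ZMod 2 := fun i =>
    if h : ∃ c : ZMod 2, f i = (fun x : G => x i) ⁻¹' {c} then h.choose else 0 with hgc
  have hfg : ∀ i ∈ s, f i = (fun x : G => x i) ⁻¹' {gc i} := by
    intro i hi
    have h := hg i hi
    simp only [hgc, dif_pos h]
    exact h.choose_spec
  have hinter : ⋂ i ∈ s, f i = {x : G | ∀ i ∈ s, x i = gc i} := by
    ext x
    simp only [Set.mem_iInter, Set.mem_setOf_eq]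
    constructor
    · intro h i hi
      have := h i hi
      rw [hfg i hi] at this
      simpa using this
    · intro h i hi
      rw [hfg i hi]
      simpa using h i hi
  rw [hinter, mu_cyl]
  have hmu : ∀ i ∈ s, mu (f i) = (2 : ENNReal)⁻¹ := fun i hi => by
    rw [hfg i hi]; exact mu_eval i (gc i)
  rw [Finset.prod_congr rfl hmu, Finset.prod_const]

lemma tail_zero_one (A : Set G) (hA : MeasurableSet A)
    (hiv : ∀ x y : G, (∃ N, ∀ n > N, x n = y n) → (x ∈ A ↔ y ∈ A)) :
    mu A = 0 ∨ mu A = 1 := by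
  apply measure_zero_or_one_of_measurableSet_limsup_atTop coordSA_le iIndep_coord
  rw [limsup_eq_iInf_iSup_of_nat, MeasurableSpace.measurableSet_iInf]
  intro N
  set M : MeasurableSpace G := ⨆ i ≥ N, coordSA i with hM
  set gN : G → G := fun x n => if n < N then 0 else x n with hgN
  have hgm : @Measurable G G M MeasurableSpace.pi gN := by
    apply measurable_pi_lambda
    intro n
    by_cases h : n < N
    · simp only [hgN, if_pos h]
      exact @measurable_const _ _ _ M _
    · simp only [hgN, if_neg h]
      have hle : coordSA n ≤ M := le_iSup₂ (f := fun i (_ : i ≥ N) => coordSA i) n (not_lt.1 h)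
      exact Measurable.mono (measurable_iff_comap_le.2 le_rfl) hle le_rfl
  have hEq : A = gN ⁻¹' A := by
    ext x
    apply hiv
    exact ⟨N, fun n hn => by simp only [hgN, if_neg (by omega : ¬ n < N)]⟩
  rw [hEq]
  exact hgm hA

lemma mu_singleton (x : G) : mu {x} = 0 := by
  have h : ∀ N : ℕ, mu {x} ≤ (2 : ENNReal)⁻¹ ^ N := by
    intro N
    have := mu_cyl (Finset.range N) x
    rw [Finset.card_range] at this
    rw [← this]
    apply measure_mono
    rintro y rfl
    exact fun i _ => rfl
  have htends : Tendsto (fun N : ℕ => (2 : ENNReal)⁻¹ ^ N) atTop (nhds 0) :=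
    ENNReal.tendsto_pow_atTop_nhds_zero_of_lt_one (by norm_num)
  exact le_antisymm (ge_of_tendsto' htends h) zero_le

instance : NullSingletonClass mu := ⟨mu_singleton⟩

lemma class_zero (x₀ : G) : mu {y : G | ∃ N, ∀ n > N, y n = x₀ n} = 0 := by
  have hcls : {y : G | ∃ N, ∀ n > N, y n = x₀ n}
      = ⋃ N : ℕ, {y : G | ∀ n > N, y n = x₀ n} := by
    ext y; simp [Set.mem_iUnion]
  rw [hcls]
  apply Set.Countable.measure_zero
  apply Set.countable_iUnion
  intro N
  apply Set.Finite.countable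
  have hsub : {y : G | ∀ n > N, y n = x₀ n} ⊆
      Set.range (fun (v : Fin (N + 1) → ZMod 2) => fun n => if h : n < N + 1 then v ⟨n, h⟩ else x₀ n) := by
    intro y hy
    refine ⟨fun i => y i, ?_⟩
    funext n
    by_cases h : n < N + 1
    · simp [h]
    · simp only [dif_neg h]
      exact (hy n (by omega)).symm
  exact (Set.finite_range _).subset hsub

end E0Impl

/-- There is no Borel reduction of the equivalence relation `E₀` of eventual agreement
on `2^ℕ` to equality on `2^ℕ`. -/
theorem no_borel_reduction_E0_to_equality :
    ¬ ∃ θ : (ℕ → Bool) → (ℕ → Bool), Measurable θ ∧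
        ∀ x y : ℕ → Bool, (∃ N : ℕ, ∀ n > N, x n = y n) ↔ θ x = θ y := by
  classical
  rintro ⟨θ, hθm, hθ⟩
  open E0Impl in
  let e : Bool → ZMod 2 := fun b => cond b 1 0
  let e' : ZMod 2 → Bool := fun c => decide (c = 1)
  have hee' : ∀ c : ZMod 2, e (e' c) = c := by decide
  have he'e : ∀ b : Bool, e' (e b) = b := by decide
  let φ : E0Impl.G → (ℕ → Bool) := fun x n => e' (x n)
  let ψ : (ℕ → Bool) → E0Impl.G := fun x n => e (x n)
  let θ' : E0Impl.G → E0Impl.G := fun x => ψ (θ (φ x))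
  have hφm : Measurable φ :=
    measurable_pi_lambda _ fun n =>
      (Measurable.of_discrete (f := e')).comp (measurable_pi_apply (X := fun _ : ℕ => ZMod 2) n)
  have hψm : Measurable ψ :=
    measurable_pi_lambda _ fun n =>
      (Measurable.of_discrete (f := e)).comp (measurable_pi_apply (X := fun _ : ℕ => Bool) n)
  have hθ'm : Measurable θ' := hψm.comp (hθm.comp hφm)
  have hθ' : ∀ x y : E0Impl.G, (∃ N, ∀ n > N, x n = y n) ↔ θ' x = θ' y := by
    intro x y
    have h1 : (∃ N, ∀ n > N, x n = y n) ↔ (∃ N, ∀ n > N, φ x n = φ y n) := by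
      constructor
      · rintro ⟨N, hN⟩; exact ⟨N, fun n hn => by simp only [φ, hN n hn]⟩
      · rintro ⟨N, hN⟩
        refine ⟨N, fun n hn => ?_⟩
        have h := hN n hn
        simp only [φ] at h
        have : ∀ a b : ZMod 2, e' a = e' b → a = b := by decide
        exact this _ _ h
    rw [h1, hθ (φ x) (φ y)]
    constructor
    · intro h; simp only [θ', h]
    · intro h
      funext n
      have := congrFun h n
      simp only [θ', ψ] at this
      have hinj : ∀ a b : Bool, e a = e b → a = b := by decide
      exact hinj _ _ this
  -- the coordinate sets
  let A : ℕ → ZMod 2 → Set E0Impl.G := fun n c => {x | θ' x n = c}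
  have hAm : ∀ n c, MeasurableSet (A n c) :=
    fun n c => (measurable_pi_apply n).comp hθ'm (MeasurableSet.singleton c)
  have hAiv : ∀ n c, ∀ x y : E0Impl.G, (∃ N, ∀ m > N, x m = y m) → (x ∈ A n c ↔ y ∈ A n c) := by
    intro n c x y hxy
    have : θ' x = θ' y := (hθ' x y).1 hxy
    simp only [A, Set.mem_setOf_eq, this]
  have hA01 : ∀ n c, E0Impl.mu (A n c) = 0 ∨ E0Impl.mu (A n c) = 1 :=
    fun n c => E0Impl.tail_zero_one (A n c) (hAm n c) (hAiv n c)
  let z : E0Impl.G := fun n => if E0Impl.mu (A n 1) = 1 then 1 else 0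
  have hcompl : ∀ n, A n 0 = (A n 1)ᶜ := by
    intro n
    ext x
    simp only [A, Set.mem_setOf_eq, Set.mem_compl_iff]
    have : ∀ a : ZMod 2, a = 0 ↔ ¬ a = 1 := by decide
    exact this _
  have hz : ∀ n, E0Impl.mu (A n (z n)) = 1 := by
    intro n
    simp only [z]
    split_ifs with h
    · exact h
    · have h0 : E0Impl.mu (A n 1) = 0 := (hA01 n 1).resolve_right h
      rw [hcompl n, measure_compl (hAm n 1) (measure_ne_top _ _), h0]
      simp
  let S : Set E0Impl.G := ⋂ n, A n (z n)
  have hSm : MeasurableSet S := MeasurableSet.iInter fun n => hAm n (z n)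
  have hScompl : E0Impl.mu Sᶜ = 0 := by
    rw [Set.compl_iInter]
    apply measure_iUnion_null
    intro n
    rw [measure_compl (hAm n (z n)) (measure_ne_top _ _), hz n]
    simp
  have hS1 : E0Impl.mu S = 1 := by
    have := measure_compl hSm (measure_ne_top E0Impl.mu S)
    rw [hScompl] at this
    have huniv : E0Impl.mu Set.univ = 1 := measure_univ
    rw [huniv] at this
    have hle : E0Impl.mu S ≤ 1 := prob_le_one
    rcases eq_or_lt_of_le hle with h | h
    · exact h
    · exfalso
      have : (0 : ENNReal) = 1 - E0Impl.mu S := this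
      have h1 : 1 - E0Impl.mu S ≠ 0 := by
        intro hc
        exact absurd (tsub_eq_zero_iff_le.1 hc) (not_le.2 h)
      exact h1 this.symm
  have hSne : S.Nonempty := nonempty_of_measure_ne_zero (by rw [hS1]; exact one_ne_zero)
  obtain ⟨x₀, hx₀⟩ := hSne
  have hx₀z : θ' x₀ = z := funext fun n => Set.mem_iInter.1 hx₀ n
  have hSsub : S ⊆ {y : E0Impl.G | ∃ N, ∀ n > N, y n = x₀ n} := by
    intro y hy
    have hyz : θ' y = z := funext fun n => Set.mem_iInter.1 hy n
    exact (hθ' y x₀).2 (hyz.trans hx₀z.symm)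
  have := measure_mono (μ := E0Impl.mu) hSsub
  rw [hS1, E0Impl.class_zero x₀] at this
  exact absurd this (by norm_num)
end

section
/- Let G be a Polish group, X a Polish G-space, 𝓑₀ a countable basis for the topology of G, and G₀ ⊆ G a countable dense subgroup. Let 𝒞 be a collection of Borel subsets of X closed under finite intersections and under translation by elements of G₀ (g·C ∈ 𝒞 for g ∈ G₀, C ∈ 𝒞). Then for any C₁, …, C_l ∈ 𝒞 and open sets U₁, …, U_l ⊆ G, the set C₁^{ΔU₁} ∩ ⋯ ∩ C_l^{ΔU_l} is a union of sets of the form C^{ΔU} with C ∈ 𝒞 and U ∈ 𝓑₀. -/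
open Pointwise


/-- A countable union of meagre sets is meagre. -/
lemma isMeagre_iUnion'' {α ι : Type*} [TopologicalSpace α] [Countable ι] {s : ι → Set α}
    (h : ∀ i, IsMeagre (s i)) : IsMeagre (⋃ i, s i) := by
  rw [IsMeagre, Set.compl_iUnion]
  exact countable_iInter_mem.mpr h

/-- In a Baire space, a nonempty open set is not meagre. -/
lemma aux_open_not_isMeagre {α : Type*} [TopologicalSpace α] [BaireSpace α] {V : Set α}
    (hV : IsOpen V) (hne : V.Nonempty) : ¬ IsMeagre V := by
  intro h
  have hd : Dense Vᶜ := dense_of_mem_residual h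
  obtain ⟨y, hy1, hy2⟩ := hd.inter_open_nonempty V hV hne
  exact hy2 hy1

/-- From residual equality, extract meagreness of the differences. -/
lemma aux_diff_meagre {α : Type*} [TopologicalSpace α] {s t : Set α}
    (h : s =ᶠ[residual α] t) : IsMeagre (s \ t) ∧ IsMeagre (t \ s) := by
  have h' := Filter.eventuallyEq_set.mp h
  constructor
  · rw [IsMeagre]
    filter_upwards [h'] with g hg
    simp only [Set.mem_compl_iff, Set.mem_diff, not_and, not_not]
    intro hs; exact hg.mp hs
  · rw [IsMeagre]
    filter_upwards [h'] with g hg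
    simp only [Set.mem_compl_iff, Set.mem_diff, not_and, not_not]
    intro hs; exact hg.mpr hs

/-- A finite (nonempty) intersection of members of a family closed under binary
intersections is again a member. -/
lemma aux_iInter_mem {X : Type*} (𝒞 : Set (Set X))
    (hInter : ∀ C ∈ 𝒞, ∀ D ∈ 𝒞, C ∩ D ∈ 𝒞) :
    ∀ l : ℕ, ∀ D : Fin (l + 1) → Set X, (∀ i, D i ∈ 𝒞) → (⋂ i, D i) ∈ 𝒞 := by
  intro l
  induction l with
  | zero =>
    intro D hD
    have : (⋂ i, D i) = D 0 := by
      ext x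
      simp only [Set.mem_iInter]
      exact ⟨fun h => h 0, fun h i => by rwa [Fin.fin_one_eq_zero i]⟩
    rw [this]; exact hD 0
  | succ n ih =>
    intro D hD
    have : (⋂ i, D i) = (⋂ i : Fin (n + 1), D i.castSucc) ∩ D (Fin.last (n + 1)) := by
      ext x
      simp only [Set.mem_iInter, Set.mem_inter_iff]
      constructor
      · intro h; exact ⟨fun i => h _, h _⟩
      · rintro ⟨h1, h2⟩ i
        exact Fin.lastCases h2 h1 i
    rw [this]
    exact hInter _ (ih _ fun i => hD _) _ (hD _)

/-- Left translation preserves meagreness (preimage form). -/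
lemma aux_meagre_preimage {G : Type*} [Group G] [TopologicalSpace G] [IsTopologicalGroup G]
    (g : G) {s : Set G} (h : IsMeagre s) : IsMeagre ((fun k => g * k) ⁻¹' s) :=
  h.preimage_of_isOpenMap (continuous_mul_left g) (isOpenMap_mul_left g)

/-- If `𝒞` is a family of Borel sets closed under finite intersections and under
translations by a countable dense subgroup `G₀`, then any finite intersection
`C₁^{ΔU₁} ∩ ⋯ ∩ C_l^{ΔU_l}` (with `Cᵢ ∈ 𝒞`, `Uᵢ ⊆ G` open) is a union of sets of the
form `C^{ΔU}` with `C ∈ 𝒞` and `U` in a countable basis `𝓑₀` of `G`. -/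
theorem inter_vaughtDelta_eq_union
    (G : Type*) [Group G] [TopologicalSpace G] [IsTopologicalGroup G] [PolishSpace G]
    (X : Type*) [TopologicalSpace X] [PolishSpace X] [MeasurableSpace X] [BorelSpace X]
    [MulAction G X] [ContinuousSMul G X]
    (𝓑₀ : Set (Set G)) (h𝓑₀ : TopologicalSpace.IsTopologicalBasis 𝓑₀)
    (h𝓑₀c : 𝓑₀.Countable)
    (G₀ : Subgroup G) (hG₀c : (G₀ : Set G).Countable) (hG₀d : Dense (G₀ : Set G))
    (𝒞 : Set (Set X)) (hBorel : ∀ C ∈ 𝒞, MeasurableSet C)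
    (hInter : ∀ C ∈ 𝒞, ∀ D ∈ 𝒞, C ∩ D ∈ 𝒞)
    (hTrans : ∀ g ∈ G₀, ∀ C ∈ 𝒞, (fun x : X => g • x) '' C ∈ 𝒞)
    (l : ℕ) (hl : 0 < l)
    (C : Fin l → Set X) (hC : ∀ i, C i ∈ 𝒞)
    (U : Fin l → Set G) (hU : ∀ i, IsOpen (U i)) :
    ∃ 𝒟 : Set (Set X),
      (∀ S ∈ 𝒟, ∃ C' ∈ 𝒞, ∃ V ∈ 𝓑₀, S = vaughtDelta C' V) ∧
      (⋂ i, vaughtDelta (C i) (U i)) = ⋃₀ 𝒟 := by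
  classical
  letI := TopologicalSpace.upgradeIsCompletelyMetrizable G
  letI : MeasurableSpace G := borel G
  haveI : BorelSpace G := ⟨rfl⟩
  obtain ⟨m, rfl⟩ : ∃ m, l = m + 1 := ⟨l - 1, by omega⟩
  -- The family 𝒟
  refine ⟨{S | ∃ V ∈ 𝓑₀, ∃ h : Fin (m + 1) → G, (∀ i, h i ∈ G₀) ∧
      (∀ i, (fun k => h i * k) '' V ⊆ U i) ∧
      S = vaughtDelta (⋂ i, (h i)⁻¹ • C i) V}, ?_, ?_⟩
  · rintro S ⟨V, hV, h, hhG₀, -, rfl⟩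
    refine ⟨⋂ i, (h i)⁻¹ • C i, ?_, V, hV, rfl⟩
    apply aux_iInter_mem 𝒞 hInter
    intro i
    have : (h i)⁻¹ • C i = (fun x : X => (h i)⁻¹ • x) '' C i := (Set.image_smul).symm
    rw [this]
    exact hTrans _ (inv_mem (hhG₀ i)) _ (hC i)
  · ext x
    simp only [Set.mem_iInter, Set.mem_sUnion]
    constructor
    · intro hx
      -- For each i, find a basic set where {g ∈ Uᵢ | g•x ∈ Cᵢ} is comeagre,
      -- and a dense-subgroup point in it.
      have key : ∀ i : Fin (m + 1), ∃ V' : Set G, ∃ g' : G, V' ∈ 𝓑₀ ∧ g' ∈ G₀ ∧ g' ∈ V' ∧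
          V' ⊆ U i ∧ IsMeagre (V' \ {g : G | g ∈ U i ∧ g • x ∈ C i}) := by
        intro i
        set S : Set G := {g : G | g ∈ U i ∧ g • x ∈ C i} with hS
        have hxS : ¬ IsMeagre S := hx i
        have hSmeas : MeasurableSet S := by
          have : S = U i ∩ (fun g : G => g • x) ⁻¹' (C i) := by
            ext g; simp [hS, Set.mem_preimage]
          rw [this]
          exact (hU i).measurableSet.inter
            ((continuous_id.smul continuous_const).measurable (hBorel _ (hC i)))
        obtain ⟨W, hWopen, hWeq⟩ := hSmeas.baireMeasurableSet.residualEq_isOpen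
        obtain ⟨hSW, hWS⟩ := aux_diff_meagre hWeq
        set W' := W ∩ U i with hW'
        have hW'open : IsOpen W' := hWopen.inter (hU i)
        have hW'S : IsMeagre (W' \ S) := hWS.mono (s := W \ S) (t := W' \ S) fun g hg => ⟨hg.1.1, hg.2⟩
        have hSW' : IsMeagre (S \ W') := by
          refine hSW.mono (s := S \ W) (t := S \ W') fun g hg => ⟨hg.1, fun hgW => hg.2 ⟨hgW, hg.1.1⟩⟩
        have hne : (W' ∩ S).Nonempty := by
          by_contra hcon
          rw [Set.not_nonempty_iff_eq_empty] at hcon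
          apply hxS
          refine hSW'.mono (s := S \ W') (t := S) fun g hg => ⟨hg, fun hgW' => ?_⟩
          exact absurd (by exact ⟨hgW', hg⟩ : g ∈ W' ∩ S) (by simp [hcon])
        obtain ⟨g₀, hg₀W', hg₀S⟩ := hne
        obtain ⟨V', hV'𝓑, hg₀V', hV'W'⟩ := h𝓑₀.exists_subset_of_mem_open hg₀W' hW'open
        have hV'open : IsOpen V' := h𝓑₀.isOpen hV'𝓑
        obtain ⟨g', hg'G₀, hg'V'⟩ := hG₀d.exists_mem_open hV'open ⟨g₀, hg₀V'⟩
        refine ⟨V', g', hV'𝓑, hg'G₀, hg'V', fun g hg => (hV'W' hg).2, ?_⟩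
        exact hW'S.mono (s := W' \ S) (t := V' \ S) fun g hg => ⟨hV'W' hg.1, hg.2⟩
      choose V' g' hV'𝓑 hg'G₀ hg'V' hV'U hV'me using key
      -- A basic neighbourhood of 1 pushed into each V' i by g' i
      set N : Set G := ⋂ i, (fun k => g' i * k) ⁻¹' (V' i) with hN
      have hNopen : IsOpen N :=
        isOpen_iInter_of_finite fun i =>
          (h𝓑₀.isOpen (hV'𝓑 i)).preimage (continuous_mul_left (g' i))
      have h1N : (1 : G) ∈ N := by
        simp only [hN, Set.mem_iInter, Set.mem_preimage, mul_one]
        exact hg'V'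
      obtain ⟨V, hV𝓑, h1V, hVN⟩ := h𝓑₀.exists_subset_of_mem_open h1N hNopen
      have hVopen : IsOpen V := h𝓑₀.isOpen hV𝓑
      -- the target set
      refine ⟨vaughtDelta (⋂ i, (g' i)⁻¹ • C i) V,
        ⟨V, hV𝓑, g', hg'G₀, ?_, rfl⟩, ?_⟩
      · intro i g hg
        obtain ⟨k, hk, rfl⟩ := hg
        exact hV'U i (Set.mem_iInter.mp (hVN hk) i)
      · -- x ∈ vaughtDelta (⋂ i, (g' i)⁻¹ • C i) V
        intro hme
        set T : Set G := {k : G | k ∈ V ∧ k • x ∈ ⋂ i, (g' i)⁻¹ • C i} with hT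
        have hVsub : V ⊆ T ∪ ⋃ i, {k : G | k ∈ V ∧ k • x ∉ (g' i)⁻¹ • C i} := by
          intro k hk
          by_cases hkT : k ∈ T
          · exact Or.inl hkT
          · right
            simp only [hT, Set.mem_setOf_eq, Set.mem_iInter, not_and, not_forall] at hkT
            obtain ⟨i, hi⟩ := hkT hk
            exact Set.mem_iUnion.mpr ⟨i, hk, hi⟩
        have hEme : ∀ i : Fin (m + 1),
            IsMeagre {k : G | k ∈ V ∧ k • x ∉ (g' i)⁻¹ • C i} := by
          intro i
          have h1 : IsMeagre ((fun k => g' i * k) ⁻¹'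
              (V' i \ {g : G | g ∈ U i ∧ g • x ∈ C i})) :=
            aux_meagre_preimage _ (hV'me i)
          refine h1.mono fun k hk => ?_
          obtain ⟨hkV, hkC⟩ := hk
          refine ⟨Set.mem_iInter.mp (hVN hkV) i, fun hmem => hkC ?_⟩
          rw [Set.mem_inv_smul_set_iff, smul_smul]
          exact hmem.2
        have hUme : IsMeagre (T ∪ ⋃ i, {k : G | k ∈ V ∧ k • x ∉ (g' i)⁻¹ • C i}) := by
          rw [IsMeagre, Set.compl_union]
          exact Filter.inter_mem hme (isMeagre_iUnion'' hEme)
        have hVme : IsMeagre V := hUme.mono hVsub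
        exact aux_open_not_isMeagre hVopen ⟨1, h1V⟩ hVme
    · rintro ⟨S, ⟨V, hV𝓑, h, hhG₀, hsub, rfl⟩, hxS⟩ i
      intro hme
      apply hxS
      have h1 : IsMeagre ((fun k => h i * k) ⁻¹' {g : G | g ∈ U i ∧ g • x ∈ C i}) :=
        aux_meagre_preimage _ hme
      refine h1.mono fun k hk => ?_
      obtain ⟨hkV, hkD⟩ := hk
      refine ⟨hsub i ⟨k, hkV, rfl⟩, ?_⟩
      have := Set.mem_iInter.mp hkD i
      rwa [Set.mem_inv_smul_set_iff, smul_smul] at this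
end
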